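/- arXiv:2603.27899 — 3 statements merged into one kernel-verified Lean document; each statement's English description precedes it below -/
import Mathlib

section
/- Let G be a monoid and f : G → ℂ bounded. Any two topological Furstenberg systems of f are topologically isomorphic: there is a homeomorphism between them commuting with the G-actions. -/
/-- The range of a continuous map from a compact space to a Hausdorff space equals
the closure of the image of any dense set. -/
lemma range_eq_closure_image_of_dense {X Z : Type*} [TopologicalSpace X] [CompactSpace X]
    [TopologicalSpace Z] [T2Space Z] {Φ : X → Z} (hΦ : Continuous Φ) {s : Set X}
    (hs : Dense s) : Set.range Φ = closure (Φ '' s) := by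
  apply le_antisymm
  · have : Set.range Φ = Φ '' closure s := by
      rw [hs.closure_eq, Set.image_univ]
    rw [this]
    exact (image_closure_subset_closure_image hΦ)
  · have hclosed : IsClosed (Set.range Φ) :=
      (isCompact_range hΦ).isClosed
    exact closure_minimal (Set.image_subset_range _ _) hclosed

/-- Any two topological Furstenberg systems of the same bounded `f : G → ℂ` are
topologically isomorphic via an action-commuting homeomorphism. -/
theorem stmt_5 {G : Type*} [Monoid G] (f : G → ℂ) (hf : Bornology.IsBounded (Set.range f))
    {X : Type*} [TopologicalSpace X] [CompactSpace X] [T2Space X]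
    (T : G → X → X) (hTcont : ∀ g, Continuous (T g))
    (hTmul : ∀ g h x, T (g * h) x = T g (T h x)) (hTone : ∀ x, T 1 x = x)
    (a : X) (ha : Dense (Set.range fun g => T g a))
    (F : X → ℂ) (hFcont : Continuous F) (hFa : ∀ g, F (T g a) = f g)
    (hsep : ∀ x y : X, x ≠ y → ∃ g : G, F (T g x) ≠ F (T g y))
    {Y : Type*} [TopologicalSpace Y] [CompactSpace Y] [T2Space Y]
    (S : G → Y → Y) (hScont : ∀ g, Continuous (S g))
    (hSmul : ∀ g h y, S (g * h) y = S g (S h y)) (hSone : ∀ y, S 1 y = y)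
    (b : Y) (hb : Dense (Set.range fun g => S g b))
    (E : Y → ℂ) (hEcont : Continuous E) (hEb : ∀ g, E (S g b) = f g)
    (hsep' : ∀ x y : Y, x ≠ y → ∃ g : G, E (S g x) ≠ E (S g y)) :
    ∃ φ : X ≃ₜ Y, ∀ (g : G) (x : X), φ (T g x) = S g (φ x) := by
  classical
  set Φ : X → (G → ℂ) := fun x g => F (T g x) with hΦdef
  set Ψ : Y → (G → ℂ) := fun y g => E (S g y) with hΨdef
  have hΦc : Continuous Φ := continuous_pi fun g => hFcont.comp (hTcont g)
  have hΨc : Continuous Ψ := continuous_pi fun g => hEcont.comp (hScont g)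
  have hΦi : Function.Injective Φ := by
    intro x y h
    by_contra hne
    obtain ⟨g, hg⟩ := hsep x y hne
    exact hg (congrFun h g)
  have hΨi : Function.Injective Ψ := by
    intro x y h
    by_contra hne
    obtain ⟨g, hg⟩ := hsep' x y hne
    exact hg (congrFun h g)
  have key : ∀ g : G, Φ (T g a) = Ψ (S g b) := by
    intro g; funext h
    simp only [hΦdef, hΨdef, ← hTmul, ← hSmul, hFa, hEb]
  have hrange : Set.range Φ = Set.range Ψ := by
    have h1 : Set.range Φ = closure (Φ '' Set.range fun g => T g a) :=
      range_eq_closure_image_of_dense hΦc ha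
    have h2 : Set.range Ψ = closure (Ψ '' Set.range fun g => S g b) :=
      range_eq_closure_image_of_dense hΨc hb
    rw [h1, h2, ← Set.range_comp, ← Set.range_comp]
    have : (Φ ∘ fun g => T g a) = (Ψ ∘ fun g => S g b) := funext fun g => key g
    rw [this]
  let eX : X ≃ Set.range Φ := Equiv.ofInjective Φ hΦi
  have heX : Continuous eX := hΦc.subtype_mk _
  let hX : X ≃ₜ Set.range Φ := heX.homeoOfEquivCompactToT2
  let eY : Y ≃ Set.range Ψ := Equiv.ofInjective Ψ hΨi
  have heY : Continuous eY := hΨc.subtype_mk _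
  let hY : Y ≃ₜ Set.range Ψ := heY.homeoOfEquivCompactToT2
  let φ : X ≃ₜ Y := hX.trans ((Homeomorph.setCongr hrange).trans hY.symm)
  have hΨsymm : ∀ z : Set.range Ψ, Ψ (hY.symm z) = (z : G → ℂ) := by
    intro z
    exact congrArg Subtype.val (hY.apply_symm_apply z)
  have hφval : ∀ x : X, Ψ (φ x) = Φ x := by
    intro x
    have : φ x = hY.symm ⟨Φ x, hrange ▸ Set.mem_range_self x⟩ := rfl
    rw [this, hΨsymm]
  refine ⟨φ, fun g x => ?_⟩
  apply hΨi
  funext h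
  have h1 : Ψ (S g (φ x)) h = Ψ (φ x) (h * g) := by
    simp only [hΨdef, ← hSmul]
  rw [hφval] at h1
  have h2 : Ψ (φ (T g x)) h = Φ (T g x) h := congrFun (hφval (T g x)) h
  rw [h2, h1]
  simp only [hΦdef, ← hTmul]
end

section
/- Curtis–Hedlund–Lyndon for right-shift systems over a group: Let G be a group, 𝒜 a finite set, and let X, Y ⊆ 𝒜^G be closed subsets invariant under the right shifts (R_g x)(u) = x(ug). If φ : X → Y is a continuous map satisfying φ ∘ R_h = R_h ∘ φ for all h ∈ G, then there exist finitely many g_1, …, g_k ∈ G and a function ψ : 𝒜^k → 𝒜 such that φ(x)(h) = ψ(x(g_1 h), …, x(g_k h)) for all x ∈ X and h ∈ G. -/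
/-- A continuous map from a closed subset of `A^G` to discrete `A` is determined by
finitely many coordinates. -/
lemma chl_local {G A : Type*} [Finite A] [TopologicalSpace A] [DiscreteTopology A]
    (X : Set (G → A)) (hXc : IsClosed X) (Φ : {x : G → A // x ∈ X} → A)
    (hΦ : Continuous Φ) :
    ∃ S : Finset G, ∀ x (hx : x ∈ X) y (hy : y ∈ X),
      (∀ g ∈ S, x g = y g) → Φ ⟨x, hx⟩ = Φ ⟨y, hy⟩ := by
  classical
  haveI : CompactSpace {x : G → A // x ∈ X} :=
    isCompact_iff_compactSpace.mp hXc.isCompact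
  have key : ∀ p : {x : G → A // x ∈ X}, ∃ I : Finset G,
      ∀ z (hz : z ∈ X), (∀ i ∈ I, z i = p.1 i) → Φ ⟨z, hz⟩ = Φ p := by
    intro p
    have hV : IsOpen (Φ ⁻¹' {Φ p}) := (isOpen_discrete _).preimage hΦ
    obtain ⟨U, hUopen, hU⟩ := isOpen_induced_iff.mp hV
    have hpU : p.1 ∈ U := by
      have : p ∈ (Subtype.val ⁻¹' U : Set {x : G → A // x ∈ X}) := by
        rw [hU]; exact rfl
      exact this
    obtain ⟨I, u, hu, hsub⟩ := isOpen_pi_iff.mp hUopen p.1 hpU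
    refine ⟨I, fun z hz hzI => ?_⟩
    have hzU : z ∈ U := hsub (fun i hi => by
      rw [hzI i hi]; exact (hu i hi).2)
    have hmem : (⟨z, hz⟩ : {x : G → A // x ∈ X}) ∈ Subtype.val ⁻¹' U := hzU
    rw [hU] at hmem
    exact hmem
  choose I hI using key
  have hWopen : ∀ p, IsOpen {q : {x : G → A // x ∈ X} | ∀ i ∈ I p, q.1 i = p.1 i} := by
    intro p
    have h1 : IsOpen ((I p : Set G).pi fun i => ({p.1 i} : Set A)) :=
      isOpen_set_pi (I p).finite_toSet fun i _ => isOpen_discrete _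
    have heq : {q : {x : G → A // x ∈ X} | ∀ i ∈ I p, q.1 i = p.1 i} =
        Subtype.val ⁻¹' ((I p : Set G).pi fun i => ({p.1 i} : Set A)) := by
      ext q; simp [Set.mem_pi]
    rw [heq]
    exact h1.preimage continuous_subtype_val
  have hcover : (Set.univ : Set {x : G → A // x ∈ X}) ⊆
      ⋃ p, {q : {x : G → A // x ∈ X} | ∀ i ∈ I p, q.1 i = p.1 i} := by
    intro q _
    exact Set.mem_iUnion.mpr ⟨q, fun i _ => rfl⟩
  obtain ⟨T, hT⟩ := isCompact_univ.elim_finite_subcover _ hWopen hcover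
  refine ⟨T.sup I, fun x hx y hy hxy => ?_⟩
  have hxmem := hT (Set.mem_univ (⟨x, hx⟩ : {x : G → A // x ∈ X}))
  simp only [Set.mem_iUnion] at hxmem
  obtain ⟨p, hpT, hp⟩ := hxmem
  have h1 : Φ ⟨x, hx⟩ = Φ p := hI p x hx hp
  have h2 : Φ ⟨y, hy⟩ = Φ p := hI p y hy fun i hi => by
    rw [← hxy i (Finset.mem_sup.mpr ⟨p, hpT, hi⟩)]
    exact hp i hi
  rw [h1, h2]

/-- Curtis–Hedlund–Lyndon for right-shift systems over a group: a continuous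
shift-commuting map between closed shift-invariant subsets of `𝒜^G` is given by a
local code. -/
theorem stmt_12 {G : Type*} [Group G] {A : Type*} [Finite A]
    [TopologicalSpace A] [DiscreteTopology A]
    (X Y : Set (G → A)) (hXc : IsClosed X) (hYc : IsClosed Y)
    (hXinv : ∀ (u : G) (x : G → A), x ∈ X → (fun v => x (v * u)) ∈ X)
    (hYinv : ∀ (u : G) (y : G → A), y ∈ Y → (fun v => y (v * u)) ∈ Y)
    (φ : {x : G → A // x ∈ X} → {y : G → A // y ∈ Y})
    (hφcont : Continuous φ)
    (hφeq : ∀ (x : G → A) (hx : x ∈ X) (u : G),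
      (φ ⟨fun v => x (v * u), hXinv u x hx⟩ : G → A) =
        fun v => (φ ⟨x, hx⟩ : G → A) (v * u)) :
    ∃ (k : ℕ) (g : Fin k → G) (ψ : (Fin k → A) → A),
      ∀ (x : G → A) (hx : x ∈ X) (h : G),
        (φ ⟨x, hx⟩ : G → A) h = ψ (fun i => x (g i * h)) := by
  classical
  rcases isEmpty_or_nonempty A with hA | hA
  · exact ⟨1, fun _ => 1, fun f => f 0, fun x hx h => (hA.false (x 1)).elim⟩
  set Φ : {x : G → A // x ∈ X} → A := fun x => (φ x).1 1 with hΦdef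
  have hΦcont : Continuous Φ :=
    (continuous_apply (1 : G)).comp (continuous_subtype_val.comp hφcont)
  obtain ⟨S, hS⟩ := chl_local X hXc Φ hΦcont
  set g : Fin S.card → G := fun i => (S.equivFin.symm i : G) with hg
  refine ⟨S.card, g, fun a =>
    if h : ∃ x, ∃ hx : x ∈ X, (fun i => x (g i)) = a then
      Φ ⟨h.choose, h.choose_spec.choose⟩
    else Classical.arbitrary A, fun x hx h => ?_⟩
  have hx' : (fun v => x (v * h)) ∈ X := hXinv h x hx
  have hex : ∃ z, ∃ hz : z ∈ X, (fun i => z (g i)) = fun i => x (g i * h) :=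
    ⟨fun v => x (v * h), hx', rfl⟩
  simp only [dif_pos hex]
  have hc := hex.choose_spec.choose_spec
  have hagree : ∀ s ∈ S, hex.choose s = (fun v => x (v * h)) s := by
    intro s hs
    have : hex.choose (g (S.equivFin ⟨s, hs⟩)) = x (g (S.equivFin ⟨s, hs⟩) * h) :=
      congrFun hc (S.equivFin ⟨s, hs⟩)
    simpa [hg, Equiv.symm_apply_apply] using this
  have h1 : Φ ⟨hex.choose, hex.choose_spec.choose⟩ = Φ ⟨fun v => x (v * h), hx'⟩ :=
    hS _ _ _ _ hagree
  rw [h1]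
  have h2 := hφeq x hx h
  have : Φ ⟨fun v => x (v * h), hx'⟩ = (φ ⟨x, hx⟩ : G → A) (1 * h) := by
    show (φ ⟨fun v => x (v * h), hXinv h x hx⟩ : G → A) 1 = _
    rw [h2]
  rw [this, one_mul]
end

section
/- Let G be a monoid, (X, (T_g)) a minimal compact G-system, a ∈ X, and U ⊆ X a non-empty open set such that no g ∈ G satisfies T_g a ∈ closure(U) \ U. Then the indicator point 1_H ∈ {0,1}^G of the set H = {g ∈ G : T_g a ∈ U} is uniformly recurrent for the right shift, and hence its right-shift orbit closure is a minimal system. -/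
/-- If `(X,(T_g))` is minimal, `U` open non-empty, and no point `T_g a` lies in
`closure U \ U`, then the indicator of `H = {g : T_g a ∈ U}` is uniformly recurrent for
the right shift on `{0,1}^G`, and its orbit closure is a minimal system. -/
theorem stmt_17 {G : Type*} [Monoid G]
    {X : Type*} [TopologicalSpace X] [CompactSpace X] [T2Space X] [Nonempty X]
    (T : G → X → X) (hTcont : ∀ g, Continuous (T g))
    (hTmul : ∀ g h x, T (g * h) x = T g (T h x)) (hTone : ∀ x, T 1 x = x)
    (hmin : ∀ x : X, Dense (Set.range fun g => T g x))
    (a : X) (U : Set X) (hU : IsOpen U) (hUne : U.Nonempty)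
    (hbad : ∀ g : G, T g a ∉ closure U \ U)
    (χ : G → Bool) (hχ : ∀ g, χ g = true ↔ T g a ∈ U) :
    (∀ V : Set (G → Bool), IsOpen V → χ ∈ V →
      ∃ (k : ℕ) (c : Fin k → G), ∀ h : G, ∃ i, (fun u => χ (u * (c i * h))) ∈ V) ∧
    (∀ y ∈ closure {x : G → Bool | ∃ u : G, x = fun g => χ (g * u)},
      closure {x : G → Bool | ∃ u : G, x = fun g => χ (g * u)} ⊆
        closure {x : G → Bool | ∃ u : G, x = fun g => y (g * u)}) := by
  have key : ∀ V : Set (G → Bool), IsOpen V → χ ∈ V →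
      ∃ (k : ℕ) (c : Fin k → G), ∀ h : G, ∃ i, (fun u => χ (u * (c i * h))) ∈ V := by
    intro V hV hχV
    obtain ⟨F, u, hu, hsub⟩ := isOpen_pi_iff.mp hV χ hχV
    set W : Set X := ⋂ g ∈ F, T g ⁻¹' (if χ g = true then U else (closure U)ᶜ) with hWdef
    have hWopen : IsOpen W := isOpen_biInter_finset fun g _ => by
      refine (hTcont g).isOpen_preimage _ ?_
      split
      · exact hU
      · exact isClosed_closure.isOpen_compl
    have haW : a ∈ W := by
      rw [hWdef]
      simp only [Set.mem_iInter, Set.mem_preimage]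
      intro g hg
      by_cases h : χ g = true
      · simp only [h, if_true]
        exact (hχ g).mp h
      · simp only [h, if_false, Set.mem_compl_iff]
        intro hc
        exact hbad g ⟨hc, fun hU' => h ((hχ g).mpr hU')⟩
    have hcover : (Set.univ : Set X) ⊆ ⋃ g : G, T g ⁻¹' W := by
      intro x _
      obtain ⟨p, ⟨g, rfl⟩, hpW⟩ := (hmin x).exists_mem_open hWopen ⟨a, haW⟩
      exact Set.mem_iUnion.mpr ⟨g, hpW⟩
    obtain ⟨t, ht⟩ := isCompact_univ.elim_finite_subcover _
      (fun g => (hTcont g).isOpen_preimage W hWopen) hcover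
    refine ⟨t.toList.length, t.toList.get, fun h => ?_⟩
    have hmem : T h a ∈ ⋃ g ∈ t, T g ⁻¹' W := ht (Set.mem_univ _)
    obtain ⟨g, hgt, hgW⟩ := Set.mem_iUnion₂.mp hmem
    obtain ⟨i, hi⟩ := List.mem_iff_get.mp (Finset.mem_toList.mpr hgt)
    refine ⟨i, hsub ?_⟩
    intro v hv
    have hWmem : T v (T g (T h a)) ∈ (if χ v = true then U else (closure U)ᶜ) := by
      have : T g (T h a) ∈ W := hgW
      rw [hWdef] at this
      simp only [Set.mem_iInter, Set.mem_preimage] at this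
      exact this v hv
    have hTeq : T (v * (g * h)) a = T v (T g (T h a)) := by
      rw [hTmul, hTmul]
    have hχeq : χ (v * (g * h)) = χ v := by
      by_cases hcv : χ v = true
      · rw [hcv]
        refine (hχ _).mpr ?_
        rw [hTeq]
        simpa [hcv] using hWmem
      · rw [Bool.not_eq_true] at hcv
        rw [hcv, Bool.eq_false_iff, Ne, hχ, hTeq]
        simp only [hcv, Bool.false_eq_true, if_false, Set.mem_compl_iff] at hWmem
        exact fun hc => hWmem (subset_closure hc)
    show χ (v * (t.toList.get i * h)) ∈ u v
    rw [hi, hχeq]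
    exact (hu v hv).2
  refine ⟨key, ?_⟩
  intro y hy
  have hχcl : χ ∈ closure {x : G → Bool | ∃ u : G, x = fun g => y (g * u)} := by
    rw [mem_closure_iff]
    intro V hV hχV
    obtain ⟨F, u, hu, hsub⟩ := isOpen_pi_iff.mp hV χ hχV
    set C : Set (G → Bool) := {x | ∀ g ∈ F, x g = χ g} with hCdef
    have hCV : C ⊆ V := fun x hx => hsub fun v hv => by
      show x v ∈ u v
      rw [hx v hv]; exact (hu v hv).2
    have hCeq : C = ⋂ g ∈ F, (fun x : G → Bool => x g) ⁻¹' {χ g} := by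
      ext x; simp [hCdef]
    have hCopen : IsOpen C := by
      rw [hCeq]
      exact isOpen_biInter_finset fun g _ =>
        (continuous_apply g).isOpen_preimage _ (isOpen_discrete _)
    have hCclosed : IsClosed C := by
      rw [hCeq]
      exact isClosed_biInter fun g _ =>
        IsClosed.preimage (continuous_apply g) isClosed_singleton
    have hχC : χ ∈ C := fun g _ => rfl
    obtain ⟨k, c, hc⟩ := key C hCopen hχC
    set O : Set (G → Bool) :=
      ⋃ i : Fin k, (fun x : G → Bool => fun g => x (g * c i)) ⁻¹' C with hOdef
    have hOclosed : IsClosed O := isClosed_iUnion_of_finite fun i =>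
      hCclosed.preimage (continuous_pi fun g => continuous_apply _)
    have hOrb : {x : G → Bool | ∃ u : G, x = fun g => χ (g * u)} ⊆ O := by
      rintro x ⟨h, rfl⟩
      obtain ⟨i, hi⟩ := hc h
      refine Set.mem_iUnion.mpr ⟨i, ?_⟩
      show (fun g => χ (g * c i * h)) ∈ C
      have : (fun g => χ (g * c i * h)) = fun u => χ (u * (c i * h)) :=
        funext fun g => by rw [mul_assoc]
      rw [this]; exact hi
    have hyO : y ∈ O := closure_minimal hOrb hOclosed hy
    obtain ⟨i, hi⟩ := Set.mem_iUnion.mp hyO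
    exact ⟨fun g => y (g * c i), hCV hi, ⟨c i, rfl⟩⟩
  refine closure_minimal ?_ isClosed_closure
  rintro x ⟨h, rfl⟩
  have hcont : Continuous (fun x : G → Bool => fun g => x (g * h)) :=
    continuous_pi fun g => continuous_apply _
  have hmaps : Set.MapsTo (fun x : G → Bool => fun g => x (g * h))
      {x : G → Bool | ∃ u : G, x = fun g => y (g * u)}
      {x : G → Bool | ∃ u : G, x = fun g => y (g * u)} := by
    rintro z ⟨v, rfl⟩
    exact ⟨h * v, funext fun g => by simp [mul_assoc]⟩
  exact map_mem_closure hcont hχcl hmaps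
end
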